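/- Let C and S be normal matrices in ℂ^{n×n} all of whose eigenvalues have positive real part, and let σ > 0. Then the spectral radius of M(σ) = (σI + S)^{-1}(σI - C)(σI + C)^{-1}(σI - S) satisfies ρ(M(σ)) ≤ ‖(σI - C)(σI + C)^{-1}‖₂ · ‖(σI - S)(σI + S)^{-1}‖₂ < 1. -/

import Mathlib

open Matrix
open scoped Matrix.Norms.L2Operator

noncomputable instance matCStar {n : ℕ} [NeZero n] : CStarAlgebra (Matrix (Fin n) (Fin n) ℂ) := { }

/-- commute with nonsingular inverse -/
lemma commute_nonsing_inv {n : ℕ} {B C : Matrix (Fin n) (Fin n) ℂ}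
    (h : B * C = C * B) (hC : IsUnit C) : B * C⁻¹ = C⁻¹ * B := by
  have hd : IsUnit C.det := (Matrix.isUnit_iff_isUnit_det C).mp hC
  calc B * C⁻¹ = C⁻¹ * C * (B * C⁻¹) := by rw [Matrix.nonsing_inv_mul C hd, one_mul]
    _ = C⁻¹ * (C * B) * C⁻¹ := by simp [Matrix.mul_assoc]
    _ = C⁻¹ * (B * C) * C⁻¹ := by rw [h]
    _ = C⁻¹ * B * (C * C⁻¹) := by simp [Matrix.mul_assoc]
    _ = C⁻¹ * B := by rw [Matrix.mul_nonsing_inv C hd, mul_one]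

lemma isUnit_shift {n : ℕ} (σ : ℝ) (hσ : 0 < σ) (A : Matrix (Fin n) (Fin n) ℂ)
    (heig : ∀ z ∈ spectrum ℂ A, 0 < z.re) :
    IsUnit ((σ : ℂ) • (1 : Matrix (Fin n) (Fin n) ℂ) + A) := by
  rw [← spectrum.zero_notMem_iff ℂ]
  have h1 : (σ : ℂ) • (1 : Matrix (Fin n) (Fin n) ℂ) + A
      = algebraMap ℂ _ (σ : ℂ) + A := by rw [Algebra.algebraMap_eq_smul_one]
  rw [h1, ← spectrum.singleton_add_eq]
  rintro ⟨x, hx, z, hz, hxz⟩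
  rw [Set.mem_singleton_iff] at hx
  subst hx
  have h2 := heig z hz
  have h3 : (σ : ℂ) + z = 0 := hxz
  have h4 : ((σ : ℂ) + z).re = 0 := by rw [h3]; simp
  simp at h4
  linarith

lemma mySmul_isUnit_iff {n : ℕ} {c : ℂ} (hc : c ≠ 0) (B : Matrix (Fin n) (Fin n) ℂ) :
    IsUnit (c • B) ↔ IsUnit B := by
  rw [Matrix.isUnit_iff_isUnit_det, Matrix.isUnit_iff_isUnit_det, Matrix.det_smul]
  constructor
  · intro h
    exact (IsUnit.mul_iff.mp h).2
  · intro h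
    exact (isUnit_iff_ne_zero.mpr (pow_ne_zero _ hc)).mul h

lemma myIsUnit_smul_one {n : ℕ} {c : ℂ} (hc : c ≠ 0) :
    IsUnit (c • (1 : Matrix (Fin n) (Fin n) ℂ)) := by
  rw [mySmul_isUnit_iff hc]
  exact isUnit_one

lemma spectrum_mem_char {n : ℕ} (σ : ℝ) (hσ : 0 < σ) (A : Matrix (Fin n) (Fin n) ℂ)
    (heig : ∀ z ∈ spectrum ℂ A, 0 < z.re) (μ : ℂ)
    (hμ : μ ∈ spectrum ℂ
      (((σ : ℂ) • (1 : Matrix (Fin n) (Fin n) ℂ) - A) * ((σ : ℂ) • 1 + A)⁻¹)) :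
    ∃ z ∈ spectrum ℂ A, μ = ((σ : ℂ) - z) / ((σ : ℂ) + z) := by
  set Ap : Matrix (Fin n) (Fin n) ℂ := (σ : ℂ) • 1 + A with hApdef
  set Am : Matrix (Fin n) (Fin n) ℂ := (σ : ℂ) • 1 - A with hAmdef
  have hAp : IsUnit Ap := isUnit_shift σ hσ A heig
  have hApd : IsUnit Ap.det := (Matrix.isUnit_iff_isUnit_det Ap).mp hAp
  have hApinv : IsUnit Ap⁻¹ := Matrix.isUnit_nonsing_inv_iff.mpr hAp
  rw [spectrum.mem_iff] at hμ
  have key : (algebraMap ℂ (Matrix (Fin n) (Fin n) ℂ)) μ - Am * Ap⁻¹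
      = (μ • Ap - Am) * Ap⁻¹ := by
    conv_rhs => rw [Matrix.sub_mul, Matrix.smul_mul, Matrix.mul_nonsing_inv Ap hApd]
    rw [Algebra.algebraMap_eq_smul_one]
  rw [key] at hμ
  have hμ2 : ¬ IsUnit (μ • Ap - Am) := fun h => hμ (h.mul hApinv)
  have expand : μ • Ap - Am = ((μ - 1) * σ) • (1 : Matrix (Fin n) (Fin n) ℂ) + (μ + 1) • A := by
    rw [hApdef, hAmdef]
    rw [smul_add, smul_smul]
    module
  by_cases hμ1 : μ = -1
  · exfalso
    apply hμ2
    rw [expand, hμ1]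
    simp only [neg_add_cancel, zero_smul, add_zero]
    exact myIsUnit_smul_one (by
      have : ((-1 : ℂ) - 1) * σ = -2 * σ := by ring
      rw [this]
      simp [hσ.ne'])
  · have hμp1 : μ + 1 ≠ 0 := fun h => hμ1 (by linear_combination h)
    set w : ℂ := (μ - 1) * σ / (μ + 1) with hwdef
    have expand2 : μ • Ap - Am = (μ + 1) • (w • (1 : Matrix (Fin n) (Fin n) ℂ) + A) := by
      rw [expand, smul_add, smul_smul, hwdef]
      field_simp
    rw [expand2, mySmul_isUnit_iff hμp1] at hμ2
    have hz : -w ∈ spectrum ℂ A := by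
      rw [spectrum.mem_iff]
      intro h
      apply hμ2
      have : w • (1 : Matrix (Fin n) (Fin n) ℂ) + A
          = -((algebraMap ℂ (Matrix (Fin n) (Fin n) ℂ)) (-w) - A) := by
        rw [Algebra.algebraMap_eq_smul_one]
        module
      rw [this]
      exact h.neg
    refine ⟨-w, hz, ?_⟩
    have hre := heig _ hz
    have hden : (σ : ℂ) + -w ≠ 0 := by
      intro h
      have : ((σ : ℂ) + -w).re = 0 := by rw [h]; simp
      simp at this
      simp only [Complex.neg_re] at hre
      linarith
    rw [eq_div_iff hden]
    rw [hwdef]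
    field_simp
    ring

lemma mobius_norm_lt_one (σ : ℝ) (hσ : 0 < σ) (z : ℂ) (hz : 0 < z.re) :
    ‖((σ : ℂ) - z) / ((σ : ℂ) + z)‖ < 1 := by
  have hden : (σ : ℂ) + z ≠ 0 := by
    intro h
    have : ((σ : ℂ) + z).re = 0 := by rw [h]; simp
    simp at this
    linarith
  rw [norm_div, div_lt_one (norm_pos_iff.mpr hden)]
  have h1 : ‖(σ : ℂ) - z‖ ^ 2 = (σ - z.re) ^ 2 + z.im ^ 2 := by
    rw [Complex.sq_norm, Complex.normSq_apply]
    simp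
    ring
  have h2 : ‖(σ : ℂ) + z‖ ^ 2 = (σ + z.re) ^ 2 + z.im ^ 2 := by
    rw [Complex.sq_norm, Complex.normSq_apply]
    simp
    ring
  nlinarith [norm_nonneg ((σ : ℂ) - z), norm_nonneg ((σ : ℂ) + z)]

lemma commute_poly {n : ℕ} {A B : Matrix (Fin n) (Fin n) ℂ} (h : A * B = B * A)
    (p q εA εB : ℂ) :
    (p • (1 : Matrix (Fin n) (Fin n) ℂ) + εA • A) * (q • 1 + εB • B)
      = (q • 1 + εB • B) * (p • 1 + εA • A) := by
  simp only [Matrix.add_mul, Matrix.mul_add, Matrix.smul_mul, Matrix.mul_smul,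
    Matrix.one_mul, Matrix.mul_one, smul_smul, h]
  module

lemma key_norm_lt_one {n : ℕ} [NeZero n] (σ : ℝ) (hσ : 0 < σ)
    (A : Matrix (Fin n) (Fin n) ℂ) (hA : A * Aᴴ = Aᴴ * A)
    (heig : ∀ z ∈ spectrum ℂ A, 0 < z.re) :
    ‖((σ : ℂ) • (1 : Matrix (Fin n) (Fin n) ℂ) - A) * ((σ : ℂ) • 1 + A)⁻¹‖ < 1 := by
  have heigH : ∀ z ∈ spectrum ℂ Aᴴ, 0 < z.re := by
    intro z hz
    have : spectrum ℂ Aᴴ = star (spectrum ℂ A) := spectrum.map_star A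
    rw [this, Set.mem_star] at hz
    have := heig _ hz
    simpa using this
  set Ap : Matrix (Fin n) (Fin n) ℂ := (σ : ℂ) • 1 + A with hApdef
  set Am : Matrix (Fin n) (Fin n) ℂ := (σ : ℂ) • 1 - A with hAmdef
  set Bp : Matrix (Fin n) (Fin n) ℂ := (σ : ℂ) • 1 + Aᴴ with hBpdef
  set Bm : Matrix (Fin n) (Fin n) ℂ := (σ : ℂ) • 1 - Aᴴ with hBmdef
  have hAp : IsUnit Ap := isUnit_shift σ hσ A heig
  have hBp : IsUnit Bp := isUnit_shift σ hσ Aᴴ heigH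
  set X : Matrix (Fin n) (Fin n) ℂ := Am * Ap⁻¹ with hXdef
  -- rewrite forms with + (-1)•
  have hAm' : Am = (σ : ℂ) • 1 + (-1 : ℂ) • A := by rw [hAmdef]; module
  have hBm' : Bm = (σ : ℂ) • 1 + (-1 : ℂ) • Aᴴ := by rw [hBmdef]; module
  have hAp' : Ap = (σ : ℂ) • 1 + (1 : ℂ) • A := by rw [hApdef]; module
  have hBp' : Bp = (σ : ℂ) • 1 + (1 : ℂ) • Aᴴ := by rw [hBpdef]; module
  -- base commutation facts
  have cAmBp : Am * Bp = Bp * Am := by rw [hAm', hBp']; exact commute_poly hA _ _ _ _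
  have cAmBm : Am * Bm = Bm * Am := by rw [hAm', hBm']; exact commute_poly hA _ _ _ _
  have cApBp : Ap * Bp = Bp * Ap := by rw [hAp', hBp']; exact commute_poly hA _ _ _ _
  have cApBm : Ap * Bm = Bm * Ap := by rw [hAp', hBm']; exact commute_poly hA _ _ _ _
  -- lift to inverses
  have cAmBpi : Am * Bp⁻¹ = Bp⁻¹ * Am := commute_nonsing_inv cAmBp hBp
  have cApiBm : Bm * Ap⁻¹ = Ap⁻¹ * Bm := commute_nonsing_inv (cApBm.symm) hAp
  have cApiBp : Bp * Ap⁻¹ = Ap⁻¹ * Bp := commute_nonsing_inv (cApBp.symm) hAp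
  have cApiBpi : Ap⁻¹ * Bp⁻¹ = Bp⁻¹ * Ap⁻¹ := commute_nonsing_inv cApiBp.symm hBp
  -- star of X
  have hstar : star X = Bp⁻¹ * Bm := by
    rw [hXdef]
    show (Am * Ap⁻¹)ᴴ = Bp⁻¹ * Bm
    rw [Matrix.conjTranspose_mul, Matrix.conjTranspose_nonsing_inv]
    congr 1
    · rw [hApdef, hBpdef]
      rw [Matrix.conjTranspose_add, Matrix.conjTranspose_smul, Matrix.conjTranspose_one]
      congr 1
      simp
    · rw [hAmdef, hBmdef]
      rw [Matrix.conjTranspose_sub, Matrix.conjTranspose_smul, Matrix.conjTranspose_one]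
      congr 1
      simp
  -- star normality
  have hcomm : Commute X (star X) := by
    rw [hstar]
    have c1 : Commute Am (Bp⁻¹ * Bm) :=
      Commute.mul_right (cAmBpi : Commute Am Bp⁻¹) (cAmBm : Commute Am Bm)
    have c2 : Commute Ap⁻¹ (Bp⁻¹ * Bm) :=
      Commute.mul_right (cApiBpi : Commute Ap⁻¹ Bp⁻¹) (cApiBm.symm : Commute Ap⁻¹ Bm)
    exact Commute.mul_left c1 c2
  haveI hXnormal : IsStarNormal X := ⟨hcomm.symm⟩
  -- spectral radius equals norm
  have hsr : spectralRadius ℂ X = (‖X‖₊ : ENNReal) := IsStarNormal.spectralRadius_eq_nnnorm X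
  -- bound on spectrum elements
  have hbd : ∀ μ ∈ spectrum ℂ X, ‖μ‖₊ < 1 := by
    intro μ hμ
    obtain ⟨z, hz, rfl⟩ := spectrum_mem_char σ hσ A heig μ hμ
    have := mobius_norm_lt_one σ hσ z (heig z hz)
    exact_mod_cast this
  -- spectrum finite, get uniform bound
  obtain ⟨r, hr1, hall⟩ : ∃ r : NNReal, r < 1 ∧ ∀ μ ∈ spectrum ℂ X, ‖μ‖₊ ≤ r := by
    have hfin : (spectrum ℂ X).Finite := Matrix.finite_spectrum X
    by_cases hne : (spectrum ℂ X).Nonempty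
    · obtain ⟨μ₀, hμ₀, hmax⟩ := hfin.toFinset.exists_max_image (fun μ => ‖μ‖₊)
        (by rwa [Set.Finite.toFinset_nonempty])
      rw [Set.Finite.mem_toFinset] at hμ₀
      refine ⟨‖μ₀‖₊, hbd μ₀ hμ₀, fun μ hμ => ?_⟩
      exact hmax μ (hfin.mem_toFinset.mpr hμ)
    · exact ⟨0, by norm_num, fun μ hμ => absurd ⟨μ, hμ⟩ hne⟩
  have hsr2 : spectralRadius ℂ X ≤ (r : ENNReal) := by
    rw [spectralRadius]
    exact iSup₂_le fun μ hμ => ENNReal.coe_le_coe.mpr (hall μ hμ)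
  rw [hsr] at hsr2
  have : ‖X‖₊ ≤ r := ENNReal.coe_le_coe.mp hsr2
  calc ‖X‖ = (‖X‖₊ : ℝ) := rfl
    _ ≤ (r : ℝ) := this
    _ < 1 := hr1

/-- For normal matrices `C`, `S` whose eigenvalues all have positive real part and `σ > 0`,
the spectral radius of the CSCS iteration matrix `M(σ) = (σI+S)⁻¹(σI-C)(σI+C)⁻¹(σI-S)`
is bounded by `‖(σI - C)(σI + C)⁻¹‖₂ * ‖(σI - S)(σI + S)⁻¹‖₂`, which is less than one. -/
theorem cscs_spectral_radius_lt_one {n : ℕ} (hn : 0 < n) (σ : ℝ) (hσ : 0 < σ)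
    (C S Cp Cm Sp Sm : Matrix (Fin n) (Fin n) ℂ)
    (hCp : Cp = (σ : ℂ) • (1 : Matrix (Fin n) (Fin n) ℂ) + C)
    (hCm : Cm = (σ : ℂ) • (1 : Matrix (Fin n) (Fin n) ℂ) - C)
    (hSp : Sp = (σ : ℂ) • (1 : Matrix (Fin n) (Fin n) ℂ) + S)
    (hSm : Sm = (σ : ℂ) • (1 : Matrix (Fin n) (Fin n) ℂ) - S)
    (hCnormal : C * Cᴴ = Cᴴ * C) (hSnormal : S * Sᴴ = Sᴴ * S)
    (hCeig : ∀ z ∈ spectrum ℂ C, 0 < z.re)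
    (hSeig : ∀ z ∈ spectrum ℂ S, 0 < z.re) :
    spectralRadius ℂ (Sp⁻¹ * Cm * Cp⁻¹ * Sm)
      ≤ ENNReal.ofReal (‖Cm * Cp⁻¹‖ * ‖Sm * Sp⁻¹‖)
    ∧ ‖Cm * Cp⁻¹‖ * ‖Sm * Sp⁻¹‖ < 1 := by
  haveI : NeZero n := ⟨hn.ne'⟩
  have hSpu : IsUnit Sp := hSp ▸ isUnit_shift σ hσ S hSeig
  have hSpd : IsUnit Sp.det := (Matrix.isUnit_iff_isUnit_det Sp).mp hSpu
  have hnC : ‖Cm * Cp⁻¹‖ < 1 := by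
    rw [hCm, hCp]; exact key_norm_lt_one σ hσ C hCnormal hCeig
  have hnS : ‖Sm * Sp⁻¹‖ < 1 := by
    rw [hSm, hSp]; exact key_norm_lt_one σ hσ S hSnormal hSeig
  refine ⟨?_, by nlinarith [norm_nonneg (Cm * Cp⁻¹), norm_nonneg (Sm * Sp⁻¹)]⟩
  set u : (Matrix (Fin n) (Fin n) ℂ)ˣ := hSpu.unit with hudef
  have hu : (↑u : Matrix (Fin n) (Fin n) ℂ) = Sp := hSpu.unit_spec
  have huinv : (↑u⁻¹ : Matrix (Fin n) (Fin n) ℂ) = Sp⁻¹ := by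
    rw [Matrix.nonsing_inv_eq_ringInverse, ← hu, Ring.inverse_unit]
  have hconj : Sp⁻¹ * Cm * Cp⁻¹ * Sm
      = (↑u⁻¹ : Matrix (Fin n) (Fin n) ℂ) * ((Cm * Cp⁻¹) * (Sm * Sp⁻¹)) * (↑u : Matrix (Fin n) (Fin n) ℂ) := by
    rw [huinv, hu]
    simp only [Matrix.mul_assoc]
    rw [Matrix.nonsing_inv_mul Sp hSpd, Matrix.mul_one]
  rw [hconj]
  have hspec : spectralRadius ℂ ((↑u⁻¹ : Matrix (Fin n) (Fin n) ℂ) * ((Cm * Cp⁻¹) * (Sm * Sp⁻¹)) * (↑u : Matrix (Fin n) (Fin n) ℂ))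
      = spectralRadius ℂ ((Cm * Cp⁻¹) * (Sm * Sp⁻¹)) := by
    rw [spectralRadius, spectralRadius, spectrum.units_conjugate']
  rw [hspec]
  calc spectralRadius ℂ ((Cm * Cp⁻¹) * (Sm * Sp⁻¹))
      ≤ (‖(Cm * Cp⁻¹) * (Sm * Sp⁻¹)‖₊ : ENNReal) := spectrum.spectralRadius_le_nnnorm _
    _ ≤ ((‖Cm * Cp⁻¹‖₊ * ‖Sm * Sp⁻¹‖₊ : NNReal) : ENNReal) :=
        ENNReal.coe_le_coe.mpr (nnnorm_mul_le _ _)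
    _ = ENNReal.ofReal (‖Cm * Cp⁻¹‖ * ‖Sm * Sp⁻¹‖) := by
        rw [ENNReal.ofReal_mul (norm_nonneg _), ofReal_norm, enorm_eq_nnnorm,
          ofReal_norm, enorm_eq_nnnorm, ENNReal.coe_mul]
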